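/- arXiv:1512.07577 — 2 statements merged into one kernel-verified Lean document; each statement's English description precedes it below -/
import Mathlib

section
/- Let X be a complete decomposition space, i.e. a Set-valued decomposition space in which the degeneracy map s_0 : X_0 → X_1 is injective. Then every degeneracy map s_i : X_n → X_{n+1} (0 ≤ i ≤ n) is injective. -/
open CategoryTheory CategoryTheory.Limits Simplicial Opposite

/-- A map in the simplex category is *generic* if it preserves the endpoints. -/
def IsGeneric {a b : SimplexCategory} (g : a ⟶ b) : Prop :=
  g.toOrderHom 0 = 0 ∧ g.toOrderHom (Fin.last a.len) = Fin.last b.len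

/-- A map in the simplex category is *free* if it is distance preserving. -/
def IsFree {a b : SimplexCategory} (f : a ⟶ b) : Prop :=
  ∀ i : Fin (a.len + 1), (f.toOrderHom i : ℕ) = (f.toOrderHom 0 : ℕ) + (i : ℕ)

/-- A decomposition space is a simplicial set carrying every pushout in `Δ` of a
generic map `g` along a free map `f` to a pullback of sets. -/
def IsDecomposition (X : SSet) : Prop :=
  ∀ ⦃a b c d : SimplexCategory⦄ (g : a ⟶ b) (f : a ⟶ c) (h : b ⟶ d) (k : c ⟶ d),
    IsGeneric g → IsFree f → IsPushout g f h k →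
    IsPullback (X.map h.op) (X.map k.op) (X.map g.op) (X.map f.op)

/-- A simplicial set is *complete* if all degeneracy maps are injective. -/
def Complete (X : SSet) : Prop :=
  ∀ (n : ℕ) (i : Fin (n + 1)), Function.Injective (X.σ i : X _⦋n⦌ ⟶ X _⦋n + 1⦌)

/-- The free map `[1] → [n]` sending `0, 1` to `i, i+1`; it induces the map
taking the `i`-th principal edge (`0`-indexed) of an `n`-simplex. -/
def principalEdge (n : ℕ) (i : Fin n) : (⦋1⦌ : SimplexCategory) ⟶ ⦋n⦌ :=
  SimplexCategory.mkHom
    { toFun := fun j => ⟨i.1 + j.1, by have := i.2; have := j.2; omega⟩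
      monotone' := fun a b h => by
        simp only [Fin.mk_le_mk]
        exact Nat.add_le_add_left h i.1 }

/-- The unique generic map `[1] → [n]` (`0 ↦ 0`, `1 ↦ n`); it induces the map
taking the long edge of an `n`-simplex. -/
def longEdgeMap (n : ℕ) : (⦋1⦌ : SimplexCategory) ⟶ ⦋n⦌ :=
  SimplexCategory.mkHom
    { toFun := fun j => ⟨j.1 * n, by
        have h := j.2
        have : j.1 * n ≤ 1 * n := Nat.mul_le_mul_right n (by omega)
        omega⟩
      monotone' := fun a b h => by
        simp only [Fin.mk_le_mk]
        exact Nat.mul_le_mul_right n h }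

/-- The alphabet `{0, 1, a}`: `z` prescribes a degenerate principal edge, `o` an
unrestricted one, `a` a nondegenerate one. -/
inductive Letter where
  | z
  | o
  | a
  deriving DecidableEq

/-- The subset of `X₁` prescribed by a letter. -/
def edgeSet (X : SSet) : Letter → Set (X _⦋1⦌) := fun l =>
  Letter.casesOn (motive := fun _ => Set (X _⦋1⦌)) l
    (Set.range (X.σ (0 : Fin 1)))
    Set.univ
    (Set.range (X.σ (0 : Fin 1)))ᶜ

/-- `X_w`, the set of `n`-simplices whose principal edges have the types
prescribed by the word `w`. -/
def wordSet (X : SSet) {n : ℕ} (w : Fin n → Letter) : Set (X _⦋n⦌) :=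
  {σ | ∀ i : Fin n, X.map (principalEdge n i).op σ ∈ edgeSet X (w i)}

/-- A simplex is *effective* if all its principal edges are nondegenerate. -/
def Effective (X : SSet) {n : ℕ} (σ : X _⦋n⦌) : Prop :=
  ∀ i : Fin n, X.map (principalEdge n i).op σ ∉ Set.range (X.σ (0 : Fin 1))

/-- The constant word `aa⋯a`. -/
def allA (n : ℕ) : Fin n → Letter := fun _ => Letter.a

/-- Concatenation of words. -/
def concatW {m n : ℕ} (v : Fin m → Letter) (v' : Fin n → Letter) : Fin (m + n) → Letter :=
  fun i => if h : i.1 < m then v ⟨i.1, h⟩ else v' ⟨i.1 - m, by have := i.2; omega⟩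

/-- The word `v ℓ v'` obtained by splicing a letter `ℓ` between the words `v` and `v'`. -/
def splice {m n : ℕ} (v : Fin m → Letter) (l : Letter) (v' : Fin n → Letter) :
    Fin (m + n + 1) → Letter :=
  fun i => if h : i.1 < m then v ⟨i.1, h⟩
    else if h2 : i.1 = m then l
    else v' ⟨i.1 - (m + 1), by have := i.2; omega⟩

/-- A simplex (of positive dimension) is degenerate if it is in the image of some
degeneracy map. -/
def Degen (X : SSet) {n : ℕ} (σ : X _⦋n + 1⦌) : Prop :=
  ∃ i : Fin (n + 1), σ ∈ Set.range (X.σ i)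

/-- A simplicial map is *cULF* if its naturality squares on all generic maps are
pullbacks. -/
def IsCULF {Y X : SSet} (f : Y ⟶ X) : Prop :=
  ∀ ⦃a b : SimplexCategory⦄ (g : a ⟶ b), IsGeneric g →
    IsPullback (f.app (op b)) (Y.map g.op) (X.map g.op) (f.app (op a))

/-- A simplicial map is *conservative* if its naturality squares on all degeneracy
maps are pullbacks. -/
def Conservative {Y X : SSet} (f : Y ⟶ X) : Prop :=
  ∀ (n : ℕ) (i : Fin (n + 1)),
    IsPullback (f.app (op (SimplexCategory.mk n))) (Y.σ i) (X.σ i)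
      (f.app (op (SimplexCategory.mk (n + 1))))

/-- A simplicial set is *stiff* if it carries every pushout in `Δ` of a codegeneracy
map along a free map to a pullback of sets. -/
def Stiff (X : SSet) : Prop :=
  ∀ (k : ℕ) (i : Fin (k + 1)) ⦃c d : SimplexCategory⦄
    (f : SimplexCategory.mk (k + 1) ⟶ c) (h : SimplexCategory.mk k ⟶ d) (j : c ⟶ d),
    IsFree f → IsPushout (SimplexCategory.σ i) f h j →
    IsPullback (X.map h.op) (X.map j.op) (X.map (SimplexCategory.σ i).op) (X.map f.op)

/-- The map `[0] → [n]` picking out the vertex `i`. -/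
def vertexMap (n : ℕ) (i : Fin (n + 1)) : (⦋0⦌ : SimplexCategory) ⟶ ⦋n⦌ :=
  SimplexCategory.mkHom ⟨fun _ => i, fun _ _ _ => le_refl _⟩

/-- The unique map `[n] → [0]`; it induces the iterated degeneracy `X₀ → Xₙ`. -/
def toZero (n : ℕ) : (⦋n⦌ : SimplexCategory) ⟶ ⦋0⦌ :=
  SimplexCategory.mkHom ⟨fun _ => 0, fun _ _ _ => le_refl _⟩

/-- The generic map `[2] → [m+n]` sending `0,1,2` to `0,m,m+n`. -/
def midMap (m n : ℕ) : (⦋2⦌ : SimplexCategory) ⟶ ⦋m + n⦌ :=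
  SimplexCategory.mkHom
    { toFun := fun j => ⟨if j.1 = 0 then 0 else if j.1 = 1 then m else m + n, by
        split
        · omega
        · split <;> omega⟩
      monotone' := by
        intro a b hab
        have h : a.1 ≤ b.1 := hab
        have ha := a.2
        have hb := b.2
        simp only [Fin.mk_le_mk]
        split <;> split <;> (try split) <;> (try split) <;> omega }

/-- The free map `[m] → [m+n]` onto the initial segment. -/
def freeInitial (m n : ℕ) : (⦋m⦌ : SimplexCategory) ⟶ ⦋m + n⦌ :=
  SimplexCategory.mkHom ⟨fun i => ⟨i.1, by have := i.2; omega⟩, fun a b h => h⟩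

/-- The free map `[n] → [m+n]` onto the final segment. -/
def freeFinal (m n : ℕ) : (⦋n⦌ : SimplexCategory) ⟶ ⦋m + n⦌ :=
  SimplexCategory.mkHom ⟨fun i => ⟨m + i.1, by have := i.2; omega⟩,
    fun a b h => by
      simp only [Fin.mk_le_mk]
      exact Nat.add_le_add_left h m⟩

/-- The word `1aa⋯a` (`n` letters `a`). -/
def oneA (n : ℕ) : Fin (n + 1) → Letter := fun i => if i.1 = 0 then Letter.o else Letter.a

/-- The word `0aa⋯a` (`n` letters `a`). -/
def zeroA (n : ℕ) : Fin (n + 1) → Letter := fun i => if i.1 = 0 then Letter.z else Letter.a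

/-- The word `aa⋯a1` (`n` letters `a`). -/
def aOne (n : ℕ) : Fin (n + 1) → Letter := fun i => if i.1 = n then Letter.o else Letter.a

/-- The word `aa⋯a0` (`n` letters `a`). -/
def aZero (n : ℕ) : Fin (n + 1) → Letter := fun i => if i.1 = n then Letter.z else Letter.a

/-- The number of letters `0` in a word. -/
def zcount {n : ℕ} (w : Fin n → Letter) : ℕ :=
  (Finset.univ.filter fun i => w i = Letter.z).card

/-- The surjection `[n] → [n - zcount w]` collapsing, for each position `j` with
`w j = 0`, the vertex `j+1` onto the vertex `j`; the induced map
`X_{n - zcount w} → X_n` is the iterated degeneracy `s_{j_k} ⋯ s_{j_1}` where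
`j_1 < ⋯ < j_k` are the positions of the letters `0` of `w`. -/
def collapseMap {n : ℕ} (w : Fin n → Letter) :
    (⦋n⦌ : SimplexCategory) ⟶ ⦋n - zcount w⦌ :=
  SimplexCategory.mkHom
    { toFun := fun t =>
        ⟨(Finset.univ.filter fun i : Fin n => i.1 < t.1 ∧ ¬ (w i = Letter.z)).card, by
          have h2 := Finset.card_filter_add_card_filter_not
            (s := (Finset.univ : Finset (Fin n))) (p := fun i => w i = Letter.z)
          have h1 : (Finset.univ.filter fun i : Fin n => i.1 < t.1 ∧ ¬ (w i = Letter.z)).card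
              ≤ (Finset.univ.filter fun i : Fin n => ¬ (w i = Letter.z)).card :=
            Finset.card_le_card (fun x hx => by
              simp only [Finset.mem_filter] at hx ⊢
              exact ⟨hx.1, hx.2.2⟩)
          have h3 : zcount w = (Finset.univ.filter fun i : Fin n => w i = Letter.z).card := rfl
          simp only [Finset.card_univ, Fintype.card_fin] at h2
          omega⟩
      monotone' := by
        intro a b hab
        have h : a.1 ≤ b.1 := hab
        simp only [Fin.mk_le_mk]
        exact Finset.card_le_card (fun x hx => by
          simp only [Finset.mem_filter] at hx ⊢
          exact ⟨hx.1, lt_of_lt_of_le hx.2.1 h, hx.2.2⟩) }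

/-- An edge has finite length if there is a bound on the dimensions of the effective
simplices having it as long edge. -/
def FiniteLength (X : SSet) (a : X _⦋1⦌) : Prop :=
  ∃ N : ℕ, ∀ (n : ℕ) (σ : X _⦋n⦌), Effective X σ →
    X.map (longEdgeMap n).op σ = a → n ≤ N

/-- A *tight* decomposition space: a complete decomposition space in which every edge
has finite length. -/
def Tight (X : SSet) : Prop :=
  IsDecomposition X ∧ Function.Injective (X.σ (0 : Fin 1) : X _⦋0⦌ ⟶ X _⦋1⦌) ∧
    ∀ a : X _⦋1⦌, FiniteLength X a

/-- The length of an edge: the supremum of the dimensions of effective simplices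
having it as long edge. -/
noncomputable def edgeLength (X : SSet) (a : X _⦋1⦌) : ℕ :=
  sSup {n | ∃ σ : X _⦋n⦌, Effective X σ ∧ X.map (longEdgeMap n).op σ = a}

/-- A complete simplicial set is *split* if all face maps preserve nondegenerate
simplices. -/
def Split (X : SSet) : Prop :=
  Complete X ∧ ∀ (n : ℕ) (i : Fin (n + 3)) (σ : X _⦋n + 2⦌),
    ¬ Degen X σ → ¬ Degen X (X.δ i σ)

/-- The counit: the indicator function of the degenerate edges. -/
noncomputable def epsFun (X : SSet) : X _⦋1⦌ → ℚ := fun f =>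
  haveI := Classical.propDecidable (f ∈ Set.range (X.σ (0 : Fin 1)))
  if f ∈ Set.range (X.σ (0 : Fin 1)) then 1 else 0

/-- Convolution product on `ℚ`-valued functions on `X₁`. -/
noncomputable def convFun (X : SSet) (φ ψ : X _⦋1⦌ → ℚ) : X _⦋1⦌ → ℚ :=
  fun f => ∑ᶠ σ ∈ (fun τ => X.δ (1 : Fin 3) τ) ⁻¹' {f},
    φ (X.δ (2 : Fin 3) σ) * ψ (X.δ (0 : Fin 3) σ)

/-- The Möbius function `Φ_even - Φ_odd`. -/
noncomputable def muFun (X : SSet) : X _⦋1⦌ → ℚ :=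
  fun f => ∑ᶠ n : ℕ, (-1 : ℚ) ^ n *
    (Nat.card {σ : X.obj (op (SimplexCategory.mk n)) // Effective X σ ∧ X.map (longEdgeMap n).op σ = f} : ℚ)

/-- The category `Δ_inj`: objects those of the simplex category, morphisms the
injective monotone maps. -/
structure DeltaInj : Type where
  /-- the underlying object of the simplex category -/
  obj : SimplexCategory

instance : Category DeltaInj where
  Hom a b := {f : a.obj ⟶ b.obj // Function.Injective f.toOrderHom}
  id a := ⟨𝟙 a.obj, by
    rw [SimplexCategory.id_toOrderHom]
    exact fun x y h => h⟩
  comp f g := ⟨f.1 ≫ g.1, by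
    rw [SimplexCategory.comp_toOrderHom]
    exact fun x y h => f.2 (g.2 h)⟩
  id_comp f := by apply Subtype.ext; simp
  comp_id f := by apply Subtype.ext; simp
  assoc f g h := by apply Subtype.ext; simp

/-- The inclusion functor `Δ_inj ⊆ Δ`. -/
def DeltaInj.incl : DeltaInj ⥤ SimplexCategory where
  obj a := a.obj
  map f := f.1

/-- A *semi-decomposition space*: a semi-simplicial set carrying every pushout in
`Δ_inj` of a generic (inner) face map along a free (outer) face map to a pullback. -/
def IsSemiDecomposition (Z : DeltaInjᵒᵖ ⥤ Type) : Prop :=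
  ∀ ⦃a b c d : DeltaInj⦄ (g : a ⟶ b) (f : a ⟶ c) (h : b ⟶ d) (k : c ⟶ d),
    IsGeneric g.1 → IsFree f.1 → IsPushout g f h k →
    IsPullback (Z.map h.op) (Z.map k.op) (Z.map g.op) (Z.map f.op)

/-- A map of semi-simplicial sets is *ULF* if its naturality squares on all generic
face maps are pullbacks. -/
def IsULF {Z W : DeltaInjᵒᵖ ⥤ Type} (φ : Z ⟶ W) : Prop :=
  ∀ ⦃a b : DeltaInj⦄ (g : a ⟶ b), IsGeneric g.1 →
    IsPullback (φ.app (op b)) (Z.map g.op) (W.map g.op) (φ.app (op a))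

lemma conservative_id (X : SSet) : Conservative (𝟙 X) := by
  intro n i
  exact IsPullback.of_horiz_isIso ⟨by simp⟩

lemma conservative_comp {X Y Z : SSet} {f : X ⟶ Y} {g : Y ⟶ Z}
    (hf : Conservative f) (hg : Conservative g) : Conservative (f ≫ g) := by
  intro n i
  simpa using IsPullback.paste_horiz (hf n i) (hg n i)

lemma isCULF_id (X : SSet) : IsCULF (𝟙 X) := by
  intro a b gm hgm
  exact IsPullback.of_horiz_isIso ⟨by simp⟩

lemma isCULF_comp {X Y Z : SSet} {f : X ⟶ Y} {g : Y ⟶ Z}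
    (hf : IsCULF f) (hg : IsCULF g) : IsCULF (f ≫ g) := by
  intro a b gm hgm
  simpa using IsPullback.paste_horiz (hf gm hgm) (hg gm hgm)

lemma isULF_id (Z : DeltaInjᵒᵖ ⥤ Type) : IsULF (𝟙 Z) := by
  intro a b gm hgm
  exact IsPullback.of_horiz_isIso ⟨by simp⟩

lemma isULF_comp {X Y Z : DeltaInjᵒᵖ ⥤ Type} {f : X ⟶ Y} {g : Y ⟶ Z}
    (hf : IsULF f) (hg : IsULF g) : IsULF (f ≫ g) := by
  intro a b gm hgm
  simpa using IsPullback.paste_horiz (hf gm hgm) (hg gm hgm)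

/-- The category of split simplicial sets and conservative maps. -/
structure SplitSSet : Type 1 where
  /-- the underlying simplicial set -/
  X : SSet.{0}
  split : Split X

instance : Category SplitSSet where
  Hom A B := {f : A.X ⟶ B.X // Conservative f}
  id A := ⟨𝟙 A.X, conservative_id A.X⟩
  comp f g := ⟨f.1 ≫ g.1, conservative_comp f.2 g.2⟩
  id_comp f := by apply Subtype.ext; simp
  comp_id f := by apply Subtype.ext; simp
  assoc f g h := by apply Subtype.ext; simp

/-- The forgetful functor from split simplicial sets to simplicial sets. -/
def SplitSSet.forget : SplitSSet ⥤ SSet where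
  obj A := A.X
  map f := f.1

/-- The category of split decomposition spaces and cULF maps. -/
structure SplitDecomp : Type 1 where
  /-- the underlying simplicial set -/
  X : SSet.{0}
  split : Split X
  decomp : IsDecomposition X

instance : Category SplitDecomp where
  Hom A B := {f : A.X ⟶ B.X // IsCULF f}
  id A := ⟨𝟙 A.X, isCULF_id A.X⟩
  comp f g := ⟨f.1 ≫ g.1, isCULF_comp f.2 g.2⟩
  id_comp f := by apply Subtype.ext; simp
  comp_id f := by apply Subtype.ext; simp
  assoc f g h := by apply Subtype.ext; simp

/-- The forgetful functor from split decomposition spaces to simplicial sets. -/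
def SplitDecomp.forget : SplitDecomp ⥤ SSet where
  obj A := A.X
  map f := f.1

/-- The category of semi-decomposition spaces and ULF maps. -/
structure SemiDecomp : Type 1 where
  /-- the underlying semi-simplicial set -/
  Z : DeltaInjᵒᵖ ⥤ Type
  semidecomp : IsSemiDecomposition Z

instance : Category SemiDecomp where
  Hom A B := {φ : A.Z ⟶ B.Z // IsULF φ}
  id A := ⟨𝟙 A.Z, isULF_id A.Z⟩
  comp f g := ⟨f.1 ≫ g.1, isULF_comp f.2 g.2⟩
  id_comp f := by apply Subtype.ext; simp
  comp_id f := by apply Subtype.ext; simp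
  assoc f g h := by apply Subtype.ext; simp

/-- The forgetful functor from semi-decomposition spaces to semi-simplicial sets. -/
def SemiDecomp.forget : SemiDecomp ⥤ (DeltaInjᵒᵖ ⥤ Type) where
  obj A := A.Z
  map f := f.1

lemma sigma_val {n} (i : Fin (n+1)) (t : Fin (n+2)) :
    (((SimplexCategory.σ i).toOrderHom t) : ℕ) = if i.1 < t.1 then t.1 - 1 else t.1 := by
  show ((i.predAbove t : Fin (n+1)) : ℕ) = _
  by_cases h : i.castSucc < t
  · rw [Fin.predAbove_of_castSucc_lt _ _ h, Fin.coe_pred]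
    rw [Fin.lt_def] at h; simp only [Fin.coe_castSucc] at h; rw [if_pos h]
  · rw [Fin.predAbove_of_le_castSucc _ _ (not_lt.1 h), Fin.coe_castPred]
    rw [Fin.lt_def] at h; simp only [Fin.coe_castSucc, not_lt] at h
    rw [if_neg (by omega)]

lemma delta_val {n} (i : Fin (n+2)) (t : Fin (n+1)) :
    (((SimplexCategory.δ i).toOrderHom t) : ℕ) = if t.1 < i.1 then t.1 else t.1 + 1 := by
  show ((i.succAbove t : Fin (n+2)) : ℕ) = _
  by_cases h : t.castSucc < i
  · rw [Fin.succAbove_of_castSucc_lt _ _ h, Fin.coe_castSucc]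
    rw [Fin.lt_def] at h; simp only [Fin.coe_castSucc] at h; rw [if_pos h]
  · rw [Fin.succAbove_of_le_castSucc _ _ (not_lt.1 h), Fin.val_succ]
    rw [Fin.lt_def] at h; simp only [Fin.coe_castSucc, not_lt] at h
    rw [if_neg (by omega)]

lemma principalEdge_val (n : ℕ) (i : Fin n) (j : Fin 2) :
    ((principalEdge n i).toOrderHom j : ℕ) = i.1 + j.1 := rfl

lemma generic_sigma0 : IsGeneric (SimplexCategory.σ (0 : Fin 1)) :=
  ⟨Subsingleton.elim (α := Fin 1) _ _, Subsingleton.elim (α := Fin 1) _ _⟩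

lemma free_principal (n : ℕ) (i : Fin n) : IsFree (principalEdge n i) := by
  intro j
  have h1 : ((principalEdge n i).toOrderHom j : ℕ) = i.1 + j.1 := rfl
  have h2 : ((principalEdge n i).toOrderHom 0 : ℕ) = i.1 + (0 : ℕ) := rfl
  omega

lemma pushout_sigma (n : ℕ) (i : Fin (n + 1)) :
    IsPushout (SimplexCategory.σ (0 : Fin 1)) (principalEdge (n + 1) i)
      (vertexMap n i) (SimplexCategory.σ i) := by
  have wsq : CommSq (SimplexCategory.σ (0 : Fin 1)) (principalEdge (n + 1) i)
      (vertexMap n i) (SimplexCategory.σ i) := by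
    constructor
    apply SimplexCategory.Hom.ext
    apply OrderHom.ext
    funext j
    show (vertexMap n i).toOrderHom ((SimplexCategory.σ (0 : Fin 1)).toOrderHom j)
      = (SimplexCategory.σ i).toOrderHom ((principalEdge (n + 1) i).toOrderHom j)
    apply Fin.ext
    have hL : (((vertexMap n i).toOrderHom ((SimplexCategory.σ (0 : Fin 1)).toOrderHom j)) : ℕ)
        = i.1 := rfl
    have hE : (((principalEdge (n + 1) i).toOrderHom j) : ℕ) = i.1 + j.1 := rfl
    rw [hL, sigma_val, hE]
    have hj : j.1 < 2 := j.2
    split_ifs <;> omega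
  refine IsPushout.of_isColimit' wsq ?_
  refine PushoutCocone.IsColimit.mk wsq.w
    (fun s => SimplexCategory.δ i.succ ≫ s.inr) ?_ ?_ ?_
  · -- fac_left : vertexMap ≫ δ i.succ ≫ s.inr = s.inl
    intro s
    have hcond : ∀ j, s.inl.toOrderHom ((SimplexCategory.σ (0 : Fin 1)).toOrderHom j)
        = s.inr.toOrderHom ((principalEdge (n + 1) i).toOrderHom j) := fun j =>
      DFunLike.congr_fun (congrArg SimplexCategory.Hom.toOrderHom s.condition) j
    apply SimplexCategory.Hom.ext
    apply OrderHom.ext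
    funext t
    show s.inr.toOrderHom ((SimplexCategory.δ i.succ).toOrderHom
      ((vertexMap n i).toOrderHom t)) = s.inl.toOrderHom t
    have h1 : (vertexMap n i).toOrderHom t = i := rfl
    rw [h1]
    have h2 : (SimplexCategory.δ i.succ).toOrderHom i = (principalEdge (n + 1) i).toOrderHom 0 := by
      apply Fin.ext
      have hp : ((principalEdge (n + 1) i).toOrderHom 0 : ℕ) = i.1 + 0 := rfl
      rw [delta_val, hp]
      simp only [Fin.val_succ]
      split_ifs <;> omega
    rw [h2, ← hcond]
    congr 1
    exact Subsingleton.elim (α := Fin 1) _ _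
  · -- fac_right : σ i ≫ δ i.succ ≫ s.inr = s.inr
    intro s
    have hcond : ∀ j, s.inl.toOrderHom ((SimplexCategory.σ (0 : Fin 1)).toOrderHom j)
        = s.inr.toOrderHom ((principalEdge (n + 1) i).toOrderHom j) := fun j =>
      DFunLike.congr_fun (congrArg SimplexCategory.Hom.toOrderHom s.condition) j
    have hσ : (SimplexCategory.σ (0 : Fin 1)).toOrderHom 0
        = (SimplexCategory.σ (0 : Fin 1)).toOrderHom 1 :=
      Subsingleton.elim (α := Fin 1) _ _
    have hkey : s.inr.toOrderHom ((principalEdge (n + 1) i).toOrderHom 0)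
        = s.inr.toOrderHom ((principalEdge (n + 1) i).toOrderHom 1) := by
      rw [← hcond 0, ← hcond 1, hσ]
    apply SimplexCategory.Hom.ext
    apply OrderHom.ext
    funext t
    show s.inr.toOrderHom ((SimplexCategory.δ i.succ).toOrderHom
      ((SimplexCategory.σ i).toOrderHom t)) = s.inr.toOrderHom t
    by_cases ht : t.1 = i.1 + 1
    · have hu : (SimplexCategory.δ i.succ).toOrderHom ((SimplexCategory.σ i).toOrderHom t)
          = (principalEdge (n + 1) i).toOrderHom 0 := by
        apply Fin.ext
        have hp : ((principalEdge (n + 1) i).toOrderHom 0 : ℕ) = i.1 + 0 := rfl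
        rw [delta_val, sigma_val, hp]
        simp only [Fin.val_succ]
        split_ifs <;> omega
      have htE : t = (principalEdge (n + 1) i).toOrderHom 1 := by
        apply Fin.ext
        have hp : ((principalEdge (n + 1) i).toOrderHom 1 : ℕ) = i.1 + 1 := rfl
        rw [hp, ht]
      rw [hu, hkey, ← htE]
    · congr 1
      apply Fin.ext
      rw [delta_val, sigma_val]
      have hti := t.2
      simp only [Fin.val_succ]
      have hii := i.2
      split_ifs <;> omega
  · -- uniqueness
    intro s m _ h2
    show m = SimplexCategory.δ i.succ ≫ s.inr
    rw [← h2, ← Category.assoc, SimplexCategory.δ_comp_σ_succ, Category.id_comp]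

theorem statement0 (X : SSet) (hX : IsDecomposition X)
    (hc : Function.Injective (X.σ (0 : Fin 1) : X _⦋0⦌ ⟶ X _⦋1⦌)) :
    ∀ (n : ℕ) (i : Fin (n + 1)), Function.Injective (X.σ i : X _⦋n⦌ ⟶ X _⦋n + 1⦌) := by
  intro n i x y hxy
  have P := hX (SimplexCategory.σ (0 : Fin 1)) (principalEdge (n + 1) i)
    (vertexMap n i) (SimplexCategory.σ i) generic_sigma0 (free_principal _ _)
    (pushout_sigma n i)
  have hk : X.map (SimplexCategory.σ i).op x = X.map (SimplexCategory.σ i).op y := hxy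
  have h1 : X.map (SimplexCategory.σ (0 : Fin 1)).op (X.map (vertexMap n i).op x)
      = X.map (principalEdge (n + 1) i).op (X.map (SimplexCategory.σ i).op x) :=
    ConcreteCategory.congr_hom P.w x
  have h2 : X.map (SimplexCategory.σ (0 : Fin 1)).op (X.map (vertexMap n i).op y)
      = X.map (principalEdge (n + 1) i).op (X.map (SimplexCategory.σ i).op y) :=
    ConcreteCategory.congr_hom P.w y
  have hv : X.map (vertexMap n i).op x = X.map (vertexMap n i).op y := by
    apply hc
    show X.map (SimplexCategory.σ (0 : Fin 1)).op (X.map (vertexMap n i).op x)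
      = X.map (SimplexCategory.σ (0 : Fin 1)).op (X.map (vertexMap n i).op y)
    rw [h1, h2, hk]
  have key : TypeCat.ofHom (fun _ : PUnit => x) = TypeCat.ofHom (fun _ : PUnit => y) :=
    PullbackCone.IsLimit.hom_ext P.isLimit (by ext; exact hv) (by ext; exact hk)
  exact ConcreteCategory.congr_hom key PUnit.unit
end

section
/- Left Kan extension along the inclusion Δ_inj^op ↪ Δ^op induces an equivalence of categories between the category of semi-simplicial sets (with all natural transformations as morphisms) and the category whose objects are split simplicial sets and whose morphisms are conservative simplicial maps. -/
open CategoryTheory CategoryTheory.Limits Simplicial Opposite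

theorem SimplexCategory.len_le_of_mono' {x y : SimplexCategory} {f : x ⟶ y} (h : Mono f) :
    x.len ≤ y.len := SimplexCategory.len_le_of_mono f

theorem SimplexCategory.len_le_of_epi' {x y : SimplexCategory} {f : x ⟶ y} (h : Epi f) :
    y.len ≤ x.len := SimplexCategory.len_le_of_epi f

section Aux14

namespace Stmt14

open SimplexCategory CategoryTheory.Limits

universe u

/-- Criterion for a commuting square of types to be a pullback. -/
lemma isPullback_of_existsUnique {P X Y Z : Type u} {fst : P ⟶ X} {snd : P ⟶ Y}
    {f : X ⟶ Z} {g : Y ⟶ Z} (comm : ∀ p, f (fst p) = g (snd p))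
    (h : ∀ (x : X) (y : Y), f x = g y → ∃! p : P, fst p = x ∧ snd p = y) :
    IsPullback fst snd f g := by
  have w : fst ≫ f = snd ≫ g := ConcreteCategory.hom_ext _ _ comm
  let c : PullbackCone f g := PullbackCone.mk fst snd w
  have hbij : Function.Bijective c.toPullbackObj := by
    constructor
    · intro p q hpq
      have h1 : fst q = fst p := congrArg (fun t => t.1.1) hpq.symm
      have h2 : snd q = snd p := congrArg (fun t => t.1.2) hpq.symm
      obtain ⟨r, -, hr⟩ := h (fst p) (snd p) (comm p)
      rw [hr p ⟨rfl, rfl⟩, hr q ⟨h1, h2⟩]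
    · rintro ⟨⟨x, y⟩, hxy⟩
      obtain ⟨p, ⟨h1, h2⟩, -⟩ := h x y hxy
      exact ⟨p, Subtype.ext (Prod.ext h1 h2)⟩
  exact IsPullback.of_isLimit ((PullbackCone.isLimitEquivBijective c).symm hbij)

/-- Extracting the universal property from a pullback square of types. -/
lemma existsUnique_of_isPullback {P X Y Z : Type u} {fst : P ⟶ X} {snd : P ⟶ Y}
    {f : X ⟶ Z} {g : Y ⟶ Z} (h : IsPullback fst snd f g) {x : X} {y : Y}
    (hxy : f x = g y) : ∃! p : P, fst p = x ∧ snd p = y := by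
  let e := PullbackCone.IsLimit.equivPullbackObj h.isLimit
  refine ⟨e.symm ⟨(x, y), hxy⟩, ⟨?_, ?_⟩, fun q hq => ?_⟩
  · exact PullbackCone.IsLimit.equivPullbackObj_symm_apply_fst h.isLimit _
  · exact PullbackCone.IsLimit.equivPullbackObj_symm_apply_snd h.isLimit _
  · apply e.injective
    rw [Equiv.apply_symm_apply]
    exact Subtype.ext (Prod.ext ((PullbackCone.IsLimit.equivPullbackObj_apply_fst h.isLimit q).trans hq.1)
      ((PullbackCone.IsLimit.equivPullbackObj_apply_snd h.isLimit q).trans hq.2))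

/-- The canonical object of `DeltaInj` on an object of the simplex category. -/
def mkObj (b : SimplexCategory) : DeltaInj := ⟨b⟩

/-- The morphism of `DeltaInj` induced by a monomorphism of the simplex category. -/
def mkHomI {b c : SimplexCategory} (i : b ⟶ c) (hi : Mono i) : mkObj b ⟶ mkObj c :=
  ⟨i, SimplexCategory.mono_iff_injective.mp hi⟩

lemma mkHomI_id (b : SimplexCategory) (h : Mono (𝟙 b)) : mkHomI (𝟙 b) h = 𝟙 (mkObj b) := rfl

lemma mkHomI_comp {b c d : SimplexCategory} (i : b ⟶ c) (j : c ⟶ d) (hi : Mono i)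
    (hj : Mono j) (hij : Mono (i ≫ j)) :
    mkHomI (i ≫ j) hij = mkHomI i hi ≫ mkHomI j hj := rfl

variable {Z W V : DeltaInjᵒᵖ ⥤ Type}

/-- The simplices of the left Kan extension of `Z`. -/
structure ESimp (Z : DeltaInjᵒᵖ ⥤ Type) (a : SimplexCategory) : Type where
  b : SimplexCategory
  e : a ⟶ b
  he : Epi e
  z : Z.obj (op (mkObj b))

lemma ESimp.ext3 {a : SimplexCategory} {s t : ESimp Z a} (h1 : s.b = t.b)
    (h2 : HEq s.e t.e) (h3 : HEq s.z t.z) : s = t := by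
  cases s; cases t
  dsimp at h1 h2 h3
  subst h1
  obtain rfl := eq_of_heq h2
  obtain rfl := eq_of_heq h3
  rfl

/-- The simplicial operator acting on `ESimp`, via image factorizations. -/
noncomputable def ESimp.map {a a' : SimplexCategory} (f : a' ⟶ a) (s : ESimp Z a) :
    ESimp Z a' :=
  haveI := s.he
  { b := image (f ≫ s.e)
    e := factorThruImage (f ≫ s.e)
    he := inferInstance
    z := Z.map (mkHomI (image.ι (f ≫ s.e)) inferInstance).op s.z }

lemma ESimp.map_eq {a a' : SimplexCategory} (f : a' ⟶ a) (s : ESimp Z a)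
    {c : SimplexCategory} (e' : a' ⟶ c) (i : c ⟶ s.b) (he' : Epi e') (hi : Mono i)
    (fac : e' ≫ i = f ≫ s.e) :
    s.map f = ⟨c, e', he', Z.map (mkHomI i hi).op s.z⟩ := by
  haveI := s.he; haveI := he'; haveI := hi
  obtain rfl := SimplexCategory.image_eq fac
  have h1 : factorThruImage (f ≫ s.e) = e' := SimplexCategory.factorThruImage_eq fac
  have h2 : image.ι (f ≫ s.e) = i := SimplexCategory.image_ι_eq fac
  subst h1; subst h2
  rfl

lemma ESimp.map_epi {a a' : SimplexCategory} (g : a' ⟶ a) (hg : Epi g) (s : ESimp Z a) :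
    s.map g = ⟨s.b, g ≫ s.e, by haveI := s.he; haveI := hg; exact epi_comp g s.e, s.z⟩ := by
  haveI := s.he; haveI := hg
  rw [ESimp.map_eq g s (g ≫ s.e) (𝟙 s.b) inferInstance inferInstance (by simp)]
  exact ESimp.ext3 rfl (HEq.refl _) (heq_of_eq (by rw [mkHomI_id]; simp))

lemma ESimp.map_mono {a a' : SimplexCategory} (f : a' ⟶ a) (hf : Mono f) (s : ESimp Z a)
    (hs : Mono s.e) :
    s.map f = ⟨a', 𝟙 a', inferInstance,
      Z.map (mkHomI (f ≫ s.e) (by haveI := hf; haveI := hs; exact mono_comp f s.e)).op s.z⟩ :=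
  ESimp.map_eq f s (𝟙 a') (f ≫ s.e) inferInstance
    (by haveI := hf; haveI := hs; exact mono_comp f s.e) (by simp)

lemma ESimp.map_map {a a' a'' : SimplexCategory} (u : a'' ⟶ a') (v : a' ⟶ a)
    (s : ESimp Z a) : (s.map v).map u = s.map (u ≫ v) := by
  haveI := s.he
  rw [ESimp.map_eq (u ≫ v) s
      (factorThruImage (u ≫ factorThruImage (v ≫ s.e)))
      (image.ι (u ≫ factorThruImage (v ≫ s.e)) ≫ image.ι (v ≫ s.e))
      inferInstance inferInstance (by rw [← Category.assoc, image.fac, Category.assoc,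
        image.fac, ← Category.assoc]),
    ESimp.map_eq u (s.map v)
      (factorThruImage (u ≫ factorThruImage (v ≫ s.e) : a'' ⟶ image (v ≫ s.e)))
      (image.ι (u ≫ factorThruImage (v ≫ s.e) : a'' ⟶ image (v ≫ s.e)))
      inferInstance
      (by exact (inferInstance : Mono (image.ι (u ≫ factorThruImage (v ≫ s.e) : a'' ⟶ image (v ≫ s.e)))))
      (image.fac (u ≫ factorThruImage (v ≫ s.e) : a'' ⟶ image (v ≫ s.e)))]
  refine ESimp.ext3 rfl (HEq.refl _) (heq_of_eq ?_)
  show Z.map _ (Z.map (mkHomI (image.ι (v ≫ s.e)) inferInstance).op s.z) = _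
  exact (FunctorToTypes.map_comp_apply Z _ _ s.z).symm

/-- The left Kan extension functor, on objects. -/
noncomputable def LObj (Z : DeltaInjᵒᵖ ⥤ Type) : SSet where
  obj a := ESimp Z a.unop
  map f := ↾fun s => s.map f.unop
  map_id a := by
    ext s
    haveI := s.he
    show s.map (𝟙 a.unop) = s
    rw [ESimp.map_eq (𝟙 a.unop) s s.e (𝟙 s.b) s.he inferInstance (by simp)]
    refine ESimp.ext3 rfl HEq.rfl (heq_of_eq ?_)
    rw [mkHomI_id]; simp
  map_comp f g := by
    ext s
    exact (ESimp.map_map g.unop f.unop s).symm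

/-- The left Kan extension functor, on morphisms. -/
noncomputable def LMap (φ : Z ⟶ W) : LObj Z ⟶ LObj W where
  app a := ↾fun s => ⟨s.b, s.e, s.he, φ.app _ s.z⟩
  naturality a a' f := by
    ext s
    haveI := s.he
    refine ESimp.ext3 rfl HEq.rfl ?_
    have := NatTrans.naturality_apply φ (mkHomI (image.ι (f.unop ≫ s.e)) inferInstance).op s.z
    exact heq_of_eq this

end Stmt14

end Aux14

section Aux2

namespace Stmt14

open SimplexCategory CategoryTheory.Limits

variable {Z W V : DeltaInjᵒᵖ ⥤ Type}

lemma ESimp.eq_destruct {a : SimplexCategory} {s t : ESimp Z a} (h : s = t) :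
    s.b = t.b ∧ HEq s.e t.e ∧ HEq s.z t.z := by subst h; exact ⟨rfl, .rfl, .rfl⟩

lemma sigma_L {n : ℕ} (i : Fin (n + 1)) (s : ESimp Z ⦋n⦌) :
    ((LObj Z).σ i : (LObj Z) _⦋n⦌ ⟶ (LObj Z) _⦋n + 1⦌) s =
      ⟨s.b, SimplexCategory.σ i ≫ s.e, by haveI := s.he; exact epi_comp _ _, s.z⟩ :=
  ESimp.map_epi _ inferInstance s

lemma delta_L {n : ℕ} (i : Fin (n + 2)) (s : ESimp Z ⦋n + 1⦌) (hs : Mono s.e) :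
    ((LObj Z).δ i : (LObj Z) _⦋n + 1⦌ ⟶ (LObj Z) _⦋n⦌) s =
      ⟨SimplexCategory.mk n, 𝟙 (SimplexCategory.mk n), inferInstance,
        Z.map (mkHomI (SimplexCategory.δ i ≫ s.e) (by haveI := hs; exact mono_comp _ _)).op
          s.z⟩ :=
  ESimp.map_mono _ inferInstance s hs

lemma not_injective_sigma_comp {n : ℕ} {b : SimplexCategory} (i : Fin (n + 1))
    (θ : SimplexCategory.mk n ⟶ b) : ¬ Function.Injective (SimplexCategory.σ i ≫ θ).toOrderHom := by
  intro h
  rw [SimplexCategory.comp_toOrderHom, OrderHom.comp_coe] at h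
  have : Function.Injective (SimplexCategory.σ i).toOrderHom :=
    Function.Injective.of_comp h
  have : Mono (SimplexCategory.σ i) := SimplexCategory.mono_iff_injective.mpr this
  have := SimplexCategory.len_le_of_mono' this
  simp at this

lemma degen_iff {n : ℕ} (s : ESimp Z ⦋n + 1⦌) :
    Degen (LObj Z) s ↔ ¬ Function.Injective s.e.toOrderHom := by
  constructor
  · rintro ⟨i, t, ht⟩
    erw [sigma_L] at ht
    obtain ⟨hb, he, -⟩ := ESimp.eq_destruct ht
    cases s
    dsimp at hb he ⊢
    subst hb
    obtain rfl := eq_of_heq he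
    exact not_injective_sigma_comp i t.e
  · intro h
    obtain ⟨i, θ, hθ⟩ := SimplexCategory.eq_σ_comp_of_not_injective s.e h
    haveI : Epi (SimplexCategory.σ i ≫ θ) := by rw [← hθ]; exact s.he
    haveI := CategoryTheory.epi_of_epi (SimplexCategory.σ i) θ
    refine ⟨i, ⟨s.b, θ, inferInstance, s.z⟩, ?_⟩
    erw [sigma_L]
    exact ESimp.ext3 rfl (heq_of_eq hθ.symm) HEq.rfl

lemma split_LObj (Z : DeltaInjᵒᵖ ⥤ Type) : Split (LObj Z) := by
  constructor
  · intro n i s t h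
    erw [sigma_L, sigma_L] at h
    obtain ⟨hb, he, hz⟩ := ESimp.eq_destruct h
    cases s; cases t
    dsimp at hb he hz
    subst hb
    obtain rfl := (cancel_epi (SimplexCategory.σ i)).mp (eq_of_heq he)
    obtain rfl := eq_of_heq hz
    rfl
  · intro n i s hs
    erw [degen_iff] at hs
    rw [not_not] at hs
    erw [degen_iff, delta_L i s (SimplexCategory.mono_iff_injective.mpr hs)]
    dsimp
    rw [not_not]
    exact fun x y hxy => hxy

lemma conservative_LMap (φ : Z ⟶ W) : Conservative (LMap φ) := by
  intro n i
  refine isPullback_of_existsUnique (fun s => ?_) (fun x y hxy => ?_)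
  · haveI := s.he
    show ESimp.map (SimplexCategory.σ i)
        (⟨s.b, s.e, s.he, φ.app _ s.z⟩ : ESimp W (SimplexCategory.mk n)) =
      (LMap φ).app (op (SimplexCategory.mk (n + 1))) (ESimp.map (SimplexCategory.σ i) s)
    rw [ESimp.map_epi (SimplexCategory.σ i) inferInstance
        (⟨s.b, s.e, s.he, φ.app _ s.z⟩ : ESimp W (SimplexCategory.mk n)),
      ESimp.map_epi (SimplexCategory.σ i) inferInstance s]
    rfl
  · replace hxy : ((LObj W).σ i : (LObj W) _⦋n⦌ ⟶ _) x = (LMap φ).app _ y := hxy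
    obtain ⟨xb, xe, xhe, xz⟩ := x
    obtain ⟨yb, ye, yhe, yz⟩ := y
    erw [sigma_L] at hxy
    obtain ⟨hb, he, hz⟩ := ESimp.eq_destruct hxy
    dsimp at hb he hz
    subst hb
    replace he : SimplexCategory.σ i ≫ xe = ye := eq_of_heq he
    replace hz : xz = φ.app _ yz := eq_of_heq hz
    refine ⟨⟨xb, xe, xhe, yz⟩, ⟨?_, ?_⟩, ?_⟩
    · exact ESimp.ext3 rfl HEq.rfl (heq_of_eq hz.symm)
    · show ESimp.map _ _ = _
      rw [ESimp.map_epi _ inferInstance]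
      exact ESimp.ext3 rfl (heq_of_eq he) HEq.rfl
    · rintro q ⟨hq1, hq2⟩
      replace hq2 : ((LObj Z).σ i : (LObj Z) _⦋n⦌ ⟶ _) q = ⟨xb, ye, yhe, yz⟩ := hq2
      erw [sigma_L] at hq2
      obtain ⟨qb, qe, qhe, qz⟩ := q
      obtain ⟨h1, h2, h3⟩ := ESimp.eq_destruct hq2
      dsimp at h1 h2 h3
      subst h1
      replace h2 : SimplexCategory.σ i ≫ qe = ye := eq_of_heq h2
      refine ESimp.ext3 rfl (heq_of_eq ?_) (heq_of_eq (eq_of_heq h3))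
      exact (cancel_epi (SimplexCategory.σ i)).mp (by rw [h2, he])

/-- The left Kan extension, as a functor to simplicial sets. -/
noncomputable def F0 : (DeltaInjᵒᵖ ⥤ Type) ⥤ SSet where
  obj := LObj
  map := LMap
  map_id Z := NatTrans.ext (funext fun a => rfl)
  map_comp φ ψ := NatTrans.ext (funext fun a => rfl)

/-- The left Kan extension, as a functor to split simplicial sets. -/
noncomputable def FS : (DeltaInjᵒᵖ ⥤ Type) ⥤ SplitSSet where
  obj Z := ⟨LObj Z, split_LObj Z⟩
  map φ := ⟨LMap φ, conservative_LMap φ⟩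
  map_id Z := Subtype.ext (NatTrans.ext (funext fun a => rfl))
  map_comp φ ψ := Subtype.ext (NatTrans.ext (funext fun a => rfl))

end Stmt14

end Aux2

section Aux3

namespace Stmt14

open SimplexCategory CategoryTheory.Limits

variable {Z W : DeltaInjᵒᵖ ⥤ Type}

/-- The restriction functor along `Δ_inj ⊆ Δ`. -/
noncomputable def RFun : SSet ⥤ (DeltaInjᵒᵖ ⥤ Type) :=
  (Functor.whiskeringLeft DeltaInjᵒᵖ SimplexCategoryᵒᵖ Type).obj DeltaInj.incl.op

lemma epi_id' (x : SimplexCategory) : Epi (𝟙 x) := inferInstance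

/-- The unit of the Kan extension adjunction. -/
noncomputable def etaApp (Z : DeltaInjᵒᵖ ⥤ Type) : Z ⟶ DeltaInj.incl.op ⋙ LObj Z where
  app a := ↾fun z => ⟨a.unop.obj, 𝟙 a.unop.obj, epi_id' _, z⟩
  naturality a a' u := by
    ext z
    show (⟨a'.unop.obj, 𝟙 a'.unop.obj, epi_id' _, Z.map u z⟩ : ESimp Z a'.unop.obj)
      = (⟨a.unop.obj, 𝟙 a.unop.obj, epi_id' _, z⟩ : ESimp Z a.unop.obj).map u.unop.1
    symm
    rw [ESimp.map_mono u.unop.1 (SimplexCategory.mono_iff_injective.mpr u.unop.2) _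
      inferInstance]
    refine ESimp.ext3 rfl HEq.rfl (heq_of_eq ?_)
    have h1 : mkHomI (u.unop.1 ≫ 𝟙 a.unop.obj) (by
        rw [Category.comp_id]
        exact SimplexCategory.mono_iff_injective.mpr u.unop.2) = u.unop :=
      Subtype.ext (Category.comp_id _)
    rw [h1]
    rfl

/-- The counit of the Kan extension adjunction. -/
noncomputable def epsApp (X : SSet) : LObj (DeltaInj.incl.op ⋙ X) ⟶ X where
  app c := ↾fun s => X.map s.e.op s.z
  naturality c c' f := by
    ext s
    haveI := s.he
    show X.map (factorThruImage (f.unop ≫ s.e)).op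
        (X.map (image.ι (f.unop ≫ s.e)).op s.z) = X.map f (X.map s.e.op s.z)
    have key : (image.ι (f.unop ≫ s.e)).op ≫ (factorThruImage (f.unop ≫ s.e)).op = s.e.op ≫ f := by
      rw [← op_comp, image.fac]; rfl
    exact (FunctorToTypes.map_comp_apply X _ _ _).symm.trans
      ((congrArg (fun g => X.map g s.z) key).trans (FunctorToTypes.map_comp_apply X _ _ _))

/-- The Kan extension adjunction for the explicit model. -/
noncomputable def adjFS : (FS ⋙ SplitSSet.forget) ⊣ RFun :=
  Adjunction.mkOfUnitCounit
    { unit :=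
        { app := etaApp
          naturality := fun Z W φ => by
            apply NatTrans.ext
            funext a; ext z
            rfl }
      counit :=
        { app := epsApp
          naturality := fun X X' g => by
            apply NatTrans.ext
            funext c; ext s
            exact (NatTrans.naturality_apply g s.e.op s.z).symm }
      left_triangle := by
        apply NatTrans.ext
        funext Z
        apply NatTrans.ext
        funext c; ext s
        show ((LObj Z).map s.e.op : ESimp Z s.b → ESimp Z c.unop)
            ⟨s.b, 𝟙 s.b, inferInstance, s.z⟩ = s
        haveI := s.he
        show ESimp.map s.e (⟨s.b, 𝟙 s.b, inferInstance, s.z⟩ : ESimp Z s.b) = s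
        rw [ESimp.map_epi s.e s.he]
        exact ESimp.ext3 rfl (heq_of_eq (Category.comp_id _)) HEq.rfl
      right_triangle := by
        apply NatTrans.ext
        funext X
        apply NatTrans.ext
        funext a; ext x
        show X.map (𝟙 (op a.unop.obj)) x = x
        exact FunctorToTypes.map_id_apply X x }

end Stmt14

end Aux3

section Aux4

namespace Stmt14

open SimplexCategory CategoryTheory.Limits

variable {Z W : DeltaInjᵒᵖ ⥤ Type}

lemma injective_id_toOrderHom (a : SimplexCategory) :
    Function.Injective (𝟙 a : a ⟶ a).toOrderHom := by
  intro x y h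
  simpa using h

lemma e_injective_of_conservative {f : LObj Z ⟶ LObj W} (hf : Conservative f)
    {n : ℕ} (s : ESimp Z (SimplexCategory.mk n))
    (hs : Function.Injective s.e.toOrderHom) :
    Function.Injective ((f.app (op (SimplexCategory.mk n)) s).e).toOrderHom := by
  match n with
  | 0 =>
    intro x y _
    exact Subsingleton.elim (α := Fin 1) x y
  | (m + 1) =>
    by_contra h
    set t := f.app (op (SimplexCategory.mk (m + 1))) s with htdef
    obtain ⟨i, θ, hθ⟩ := SimplexCategory.eq_σ_comp_of_not_injective t.e h
    haveI : Epi (SimplexCategory.σ i ≫ θ) := by rw [← hθ]; exact t.he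
    haveI := CategoryTheory.epi_of_epi (SimplexCategory.σ i) θ
    have hx : ((LObj W).σ i : (LObj W) _⦋m⦌ ⟶ _) ⟨t.b, θ, inferInstance, t.z⟩ = t := by
      erw [sigma_L]
      exact ESimp.ext3 rfl (heq_of_eq hθ.symm) HEq.rfl
    obtain ⟨p, ⟨-, hp2⟩, -⟩ := existsUnique_of_isPullback (hf m i) hx
    have := ESimp.eq_destruct ((sigma_L i p).symm.trans hp2)
    obtain ⟨hb, he, -⟩ := this
    apply not_injective_sigma_comp i p.e
    obtain ⟨sb, se, she, sz⟩ := s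
    dsimp at hb he hs
    subst hb
    rw [eq_of_heq he]
    exact hs

lemma exists_eq_of_injective {a : SimplexCategory} (t : ESimp W a)
    (ht : Function.Injective t.e.toOrderHom) :
    ∃ w : W.obj (op (mkObj a)), t = ⟨a, 𝟙 a, epi_id' a, w⟩ := by
  obtain ⟨b, e, he, z⟩ := t
  dsimp at ht ⊢
  haveI := he
  haveI hm : Mono e := SimplexCategory.mono_iff_injective.mpr ht
  have hb : b = a := by
    ext
    exact le_antisymm (SimplexCategory.len_le_of_epi' he) (SimplexCategory.len_le_of_mono' hm)
  subst hb
  obtain rfl := SimplexCategory.eq_id_of_mono e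
  exact ⟨z, rfl⟩

/-- Recovering a map of semi-simplicial sets from a conservative simplicial map. -/
noncomputable def fullPre (f : LObj Z ⟶ LObj W) (hf : Conservative f) (a : DeltaInjᵒᵖ)
    (z : Z.obj a) :
    {w : W.obj a //
      f.app (op a.unop.obj) ⟨a.unop.obj, 𝟙 a.unop.obj, epi_id' _, z⟩ =
        ⟨a.unop.obj, 𝟙 a.unop.obj, epi_id' _, w⟩} := by
  have hinj : Function.Injective
      ((f.app (op a.unop.obj) ⟨a.unop.obj, 𝟙 a.unop.obj, epi_id' _, z⟩).e).toOrderHom :=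
    e_injective_of_conservative hf (n := a.unop.obj.len)
      ⟨a.unop.obj, 𝟙 a.unop.obj, epi_id' _, z⟩ (injective_id_toOrderHom _)
  exact ⟨(exists_eq_of_injective _ hinj).choose, (exists_eq_of_injective _ hinj).choose_spec⟩

/-- The recovered natural transformation. -/
noncomputable def recover (f : LObj Z ⟶ LObj W) (hf : Conservative f) : Z ⟶ W where
  app a := ↾fun z => (fullPre f hf a z).1
  naturality a a' u := by
    ext z
    -- identify both sides as the z-field of `f` applied to a one-simplex picture
    have h1 : ((LObj Z).map ((DeltaInj.incl.op).map u) :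
        ESimp Z a.unop.obj → ESimp Z a'.unop.obj)
          ⟨a.unop.obj, 𝟙 a.unop.obj, epi_id' _, z⟩ =
        ⟨a'.unop.obj, 𝟙 a'.unop.obj, epi_id' _, Z.map u z⟩ :=
      (types_congr_hom ((etaApp Z).naturality u) z).symm
    have h2 : ((LObj W).map ((DeltaInj.incl.op).map u) :
        ESimp W a.unop.obj → ESimp W a'.unop.obj)
          ⟨a.unop.obj, 𝟙 a.unop.obj, epi_id' _, (fullPre f hf a z).1⟩ =
        ⟨a'.unop.obj, 𝟙 a'.unop.obj, epi_id' _, W.map u (fullPre f hf a z).1⟩ :=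
      (types_congr_hom ((etaApp W).naturality u) ((fullPre f hf a z).1)).symm
    have h3 : f.app (op a'.unop.obj)
          (((LObj Z).map ((DeltaInj.incl.op).map u) :
            ESimp Z a.unop.obj → ESimp Z a'.unop.obj)
            ⟨a.unop.obj, 𝟙 a.unop.obj, epi_id' _, z⟩) =
        ((LObj W).map ((DeltaInj.incl.op).map u) :
            ESimp W a.unop.obj → ESimp W a'.unop.obj)
          (f.app (op a.unop.obj) ⟨a.unop.obj, 𝟙 a.unop.obj, epi_id' _, z⟩) :=
      types_congr_hom (f.naturality ((DeltaInj.incl.op).map u))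
        (⟨a.unop.obj, 𝟙 a.unop.obj, epi_id' _, z⟩ : ESimp Z a.unop.obj)
    have h4 : (⟨a'.unop.obj, 𝟙 a'.unop.obj, epi_id' _,
          (fullPre f hf a' (Z.map u z)).1⟩ : ESimp W a'.unop.obj) =
        ⟨a'.unop.obj, 𝟙 a'.unop.obj, epi_id' _, W.map u (fullPre f hf a z).1⟩ := by
      exact (fullPre f hf a' (Z.map u z)).2.symm.trans
        ((congrArg (fun x => f.app (op a'.unop.obj) x) h1.symm).trans
          (h3.trans ((congrArg (fun x => (LObj W).map ((DeltaInj.incl.op).map u) x)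
            (fullPre f hf a z).2).trans h2)))
    obtain ⟨-, -, h5⟩ := ESimp.eq_destruct h4
    exact eq_of_heq h5

lemma recover_spec (f : LObj Z ⟶ LObj W) (hf : Conservative f) :
    LMap (recover f hf) = f := by
  apply NatTrans.ext
  funext c; ext s
  haveI := s.he
  have hs : ((LObj Z).map s.e.op : ESimp Z s.b → ESimp Z c.unop)
      ⟨s.b, 𝟙 s.b, epi_id' _, s.z⟩ = s := by
    show ESimp.map s.e (⟨s.b, 𝟙 s.b, epi_id' _, s.z⟩ : ESimp Z s.b) = s
    rw [ESimp.map_epi s.e s.he]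
    exact ESimp.ext3 rfl (heq_of_eq (Category.comp_id _)) HEq.rfl
  symm
  calc f.app c s
      = f.app c (((LObj Z).map s.e.op : ESimp Z s.b → ESimp Z c.unop)
          ⟨s.b, 𝟙 s.b, epi_id' _, s.z⟩) := by rw [hs]
    _ = ((LObj W).map s.e.op : ESimp W s.b → ESimp W c.unop)
          (f.app (op s.b) ⟨s.b, 𝟙 s.b, epi_id' _, s.z⟩) :=
        types_congr_hom (f.naturality s.e.op) _
    _ = ((LObj W).map s.e.op : ESimp W s.b → ESimp W c.unop)
          ⟨s.b, 𝟙 s.b, epi_id' _, (fullPre f hf (op (mkObj s.b)) s.z).1⟩ :=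
        congrArg ((LObj W).map s.e.op : ESimp W s.b → ESimp W c.unop)
          (fullPre f hf (op (mkObj s.b)) s.z).2
    _ = (LMap (recover f hf)).app c s := by
        show ESimp.map s.e (⟨s.b, 𝟙 s.b, epi_id' _,
            (fullPre f hf (op (mkObj s.b)) s.z).1⟩ : ESimp W s.b) = _
        rw [ESimp.map_epi s.e s.he]
        exact ESimp.ext3 rfl (heq_of_eq (Category.comp_id _)) HEq.rfl

lemma FS_faithful : FS.Faithful where
  map_injective {Z W} {φ ψ} h := by
    apply NatTrans.ext
    funext a; ext z
    have h1 := types_congr_hom (congrFun (congrArg NatTrans.app (congrArg Subtype.val h))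
      (op a.unop.obj)) (⟨a.unop.obj, 𝟙 a.unop.obj, epi_id' _, z⟩ : ESimp Z a.unop.obj)
    obtain ⟨-, -, h2⟩ := ESimp.eq_destruct h1
    exact eq_of_heq h2

lemma FS_full : FS.Full where
  map_surjective {Z W} f := ⟨recover f.1 f.2, Subtype.ext (recover_spec f.1 f.2)⟩

end Stmt14

end Aux4

section Aux5

namespace Stmt14

open SimplexCategory CategoryTheory.Limits

variable {X : SSet}

/-- A simplex of arbitrary level is nondegenerate if any epi it factors through
is an iso. -/
def ND (X : SSet) {a : SimplexCategory} (x : X.obj (op a)) : Prop :=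
  ∀ (b : SimplexCategory) (e : a ⟶ b) (y : X.obj (op b)), Epi e → x = X.map e.op y → Mono e

lemma eq_eqToHom_of_mono {u v : SimplexCategory} (f : u ⟶ v) (hf : Mono f) (h : u = v) :
    f = eqToHom h := by
  subst h
  haveI := hf
  rw [eqToHom_refl]
  exact SimplexCategory.eq_id_of_mono f

lemma nd_of_len_zero {a : SimplexCategory} (ha : a.len = 0) (x : X.obj (op a)) : ND X x := by
  intro b e y he hxy
  haveI := he
  have hb : b = a := SimplexCategory.ext
    (le_antisymm (by rw [ha]; exact Nat.le_of_lt_succ (by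
      have := SimplexCategory.len_le_of_epi' he
      omega)) (by
      have := SimplexCategory.len_le_of_epi' he
      omega))
  subst hb
  rw [SimplexCategory.mono_iff_injective]
  intro p q _
  have hp := p.isLt
  have hq := q.isLt
  ext
  omega

lemma nd_iff_not_degen {n : ℕ} (x : X _⦋n + 1⦌) : ND X x ↔ ¬ Degen X x := by
  constructor
  · rintro h ⟨i, y, hy⟩
    have := h _ (SimplexCategory.σ i) y inferInstance hy.symm
    have := SimplexCategory.len_le_of_mono' this
    simp at this
  · intro h b e y he hxy
    by_contra hm
    have hni : ¬ Function.Injective e.toOrderHom := fun hinj =>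
      hm (SimplexCategory.mono_iff_injective.mpr hinj)
    obtain ⟨i, θ, hθ⟩ := SimplexCategory.eq_σ_comp_of_not_injective e hni
    exact h ⟨i, X.map θ.op y, by
      rw [hxy, hθ]
      exact (FunctorToTypes.map_comp_apply X θ.op (SimplexCategory.σ i).op y).symm⟩

lemma nd_mono (hX : Split X) :
    ∀ (n : ℕ) (a : SimplexCategory), a.len = n →
      ∀ (b : SimplexCategory) (i : b ⟶ a) (x : X.obj (op a)),
        Mono i → ND X x → ND X (X.map i.op x) := by
  intro n
  induction n with
  | zero =>
    intro a ha b i x hi _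
    apply nd_of_len_zero
    have := SimplexCategory.len_le_of_mono' hi
    omega
  | succ n IH =>
    intro a ha b i x hi hx
    by_cases hsurj : Function.Surjective i.toOrderHom
    · haveI := hi
      haveI he : Epi i := SimplexCategory.epi_iff_surjective.mpr hsurj
      have hb : b = a := SimplexCategory.ext
        (le_antisymm (SimplexCategory.len_le_of_mono' hi) (SimplexCategory.len_le_of_epi' he))
      subst hb
      obtain rfl := SimplexCategory.eq_id_of_mono i
      have : X.map (𝟙 b).op x = x := by simp
      rw [this]
      exact hx
    · have ha2 : a = SimplexCategory.mk (n + 1) := by rw [← ha]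
      subst ha2
      obtain ⟨j, θ, hθ⟩ := SimplexCategory.eq_comp_δ_of_not_surjective i hsurj
      haveI := hi
      haveI : Mono (θ ≫ SimplexCategory.δ j) := by rw [← hθ]; infer_instance
      haveI hθm := CategoryTheory.mono_of_mono θ (SimplexCategory.δ j)
      have hx' : ND X (X.map (SimplexCategory.δ j).op x) := by
        match n, x, hx with
        | 0, x, hx => exact nd_of_len_zero (a := SimplexCategory.mk 0) rfl _
        | (k + 1), x, hx =>
          rw [nd_iff_not_degen]
          exact hX.2 k j x ((nd_iff_not_degen x).mp hx)
      have := IH (SimplexCategory.mk n) rfl b θ (X.map (SimplexCategory.δ j).op x) hθm hx'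
      rw [hθ, op_comp, FunctorToTypes.map_comp_apply]
      exact this

lemma epi_injective (hC : Complete X) :
    ∀ (n : ℕ) (a b : SimplexCategory), a.len = n → ∀ (e : a ⟶ b), Epi e →
      Function.Injective (X.map e.op) := by
  intro n
  induction n with
  | zero =>
    intro a b ha e he
    haveI := he
    have hinj : Function.Injective e.toOrderHom := by
      intro p q _
      have hp := p.isLt
      have hq := q.isLt
      ext
      omega
    haveI hm : Mono e := SimplexCategory.mono_iff_injective.mpr hinj
    have hb : b = a := SimplexCategory.ext
      (le_antisymm (SimplexCategory.len_le_of_epi' he) (SimplexCategory.len_le_of_mono' hm))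
    subst hb
    obtain rfl := SimplexCategory.eq_id_of_mono e
    intro p q h
    simpa using h
  | succ n IH =>
    intro a b ha e he
    haveI := he
    by_cases hinj : Function.Injective e.toOrderHom
    · haveI hm : Mono e := SimplexCategory.mono_iff_injective.mpr hinj
      have hb : b = a := SimplexCategory.ext
        (le_antisymm (SimplexCategory.len_le_of_epi' he) (SimplexCategory.len_le_of_mono' hm))
      subst hb
      obtain rfl := SimplexCategory.eq_id_of_mono e
      intro p q h
      simpa using h
    · have ha2 : a = SimplexCategory.mk (n + 1) := by rw [← ha]
      subst ha2
      obtain ⟨i, θ, hθ⟩ := SimplexCategory.eq_σ_comp_of_not_injective e hinj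
      haveI : Epi (SimplexCategory.σ i ≫ θ) := by rw [← hθ]; exact he
      haveI := CategoryTheory.epi_of_epi (SimplexCategory.σ i) θ
      intro p q h
      rw [hθ] at h
      rw [op_comp, FunctorToTypes.map_comp_apply, FunctorToTypes.map_comp_apply] at h
      exact IH (SimplexCategory.mk n) b rfl θ inferInstance (hC n i h)

lemma ez_exists (hX : Split X) :
    ∀ (n : ℕ) (a : SimplexCategory), a.len = n → ∀ (x : X.obj (op a)),
      ∃ (b : SimplexCategory) (e : a ⟶ b) (y : X.obj (op b)),
        Epi e ∧ ND X y ∧ x = X.map e.op y := by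
  intro n
  induction n using Nat.strong_induction_on with
  | _ n IH =>
    intro a ha x
    by_cases hnd : ND X x
    · exact ⟨a, 𝟙 a, x, inferInstance, hnd, by simp⟩
    · simp only [ND, not_forall] at hnd
      obtain ⟨b, e, y, he, hxy, hm⟩ := hnd
      haveI := he
      have hlt : b.len < n := by
        rcases lt_or_eq_of_le (SimplexCategory.len_le_of_epi' he) with h | h
        · omega
        · exfalso
          have hb : b = a := SimplexCategory.ext h
          subst hb
          exact hm (by obtain rfl := SimplexCategory.eq_id_of_epi e; infer_instance)
      obtain ⟨c, e', y', he', hnd', hy'⟩ := IH b.len hlt b rfl y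
      haveI := he'
      refine ⟨c, e ≫ e', y', epi_comp e e', hnd', ?_⟩
      rw [op_comp, FunctorToTypes.map_comp_apply, ← hy']
      exact hxy

/-- A monotone section of an epi through a prescribed preimage. -/
lemma section_through {a b : SimplexCategory} (e : a ⟶ b) (he : Epi e)
    (x : Fin (a.len + 1)) :
    ∃ d : b ⟶ a, d ≫ e = 𝟙 b ∧ d.toOrderHom (e.toOrderHom x) = x := by
  have hsurj : Function.Surjective e.toOrderHom := SimplexCategory.epi_iff_surjective.mp he
  classical
  set df : Fin (b.len + 1) → Fin (a.len + 1) :=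
    fun j => if h : j = e.toOrderHom x then x else (hsurj j).choose with hdf
  have he_df : ∀ j, e.toOrderHom (df j) = j := by
    intro j
    by_cases h : j = e.toOrderHom x
    · rw [hdf]; simp only [dif_pos h]; exact h.symm
    · rw [hdf]; simp only [dif_neg h]; exact (hsurj j).choose_spec
  have hstrict : ∀ j j', j < j' → df j < df j' := by
    intro j j' hlt
    rcases lt_trichotomy (df j) (df j') with h | h | h
    · exact h
    · exact absurd (by rw [← he_df j, ← he_df j', h]) hlt.ne
    · exact absurd (by rw [← he_df j, ← he_df j']; exact e.toOrderHom.monotone h.le)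
        (not_le_of_gt hlt)
  have hmono : Monotone df := by
    intro j j' h
    rcases lt_or_eq_of_le h with h | h
    · exact (hstrict j j' h).le
    · rw [h]
  refine ⟨SimplexCategory.mkHom ⟨df, hmono⟩, ?_, ?_⟩
  · apply SimplexCategory.Hom.ext
    apply OrderHom.ext
    funext j
    rw [SimplexCategory.comp_toOrderHom]
    show e.toOrderHom (df j) = _
    rw [he_df j, SimplexCategory.id_toOrderHom]
    rfl
  · show df (e.toOrderHom x) = x
    rw [hdf]
    simp

lemma sections_determine {a b : SimplexCategory} (e e' : a ⟶ b) (he : Epi e)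
    (h : ∀ d : b ⟶ a, d ≫ e = 𝟙 b → d ≫ e' = 𝟙 b) : e' = e := by
  apply SimplexCategory.Hom.ext
  apply OrderHom.ext
  funext x
  obtain ⟨d, hd1, hd2⟩ := section_through e he x
  have hd3 := h d hd1
  have h4 : e'.toOrderHom (d.toOrderHom (e.toOrderHom x)) = e.toOrderHom x := by
    have h5 := congrArg (fun f => f.toOrderHom (e.toOrderHom x)) hd3
    dsimp at h5
    exact h5
  rw [hd2] at h4
  exact h4

lemma ez_unique (hX : Split X) {a b b' : SimplexCategory} (e : a ⟶ b) (e' : a ⟶ b')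
    (he : Epi e) (he' : Epi e') {y : X.obj (op b)} {y' : X.obj (op b')}
    (hy : ND X y) (hy' : ND X y') (h : X.map e.op y = X.map e'.op y') :
    b = b' ∧ HEq e e' ∧ HEq y y' := by
  haveI := he; haveI := he'
  -- reconstruction along a section
  have key : ∀ {c c' : SimplexCategory} (f : a ⟶ c) (f' : a ⟶ c') (hf : Epi f)
      (w : X.obj (op c)) (w' : X.obj (op c')) (hw : ND X w)
      (hh : X.map f.op w = X.map f'.op w') (d : c ⟶ a) (hd : d ≫ f = 𝟙 c),
      w = X.map (factorThruImage (d ≫ f')).op (X.map (image.ι (d ≫ f')).op w') ∧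
        Mono (factorThruImage (d ≫ f')) := by
    intro c c' f f' hf w w' hw hh d hd
    have hw2 : w = X.map (d ≫ f').op w' := by
      have : w = X.map d.op (X.map f.op w) := by
        rw [← FunctorToTypes.map_comp_apply, ← op_comp, hd]
        simp
      rw [this, hh, ← FunctorToTypes.map_comp_apply, ← op_comp]
    have hw3 : w = X.map (factorThruImage (d ≫ f')).op (X.map (image.ι (d ≫ f')).op w') := by
      rw [← FunctorToTypes.map_comp_apply, ← op_comp, image.fac]
      exact hw2
    exact ⟨hw3, hw _ _ _ inferInstance hw3⟩
  -- lengths agree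
  obtain ⟨d, hd, -⟩ := section_through e he 0
  obtain ⟨d', hd', -⟩ := section_through e' he' 0
  obtain ⟨-, hm⟩ := key e e' he y y' hy h d hd
  obtain ⟨-, hm'⟩ := key e' e he' y' y hy' h.symm d' hd'
  have hb : b = b' := by
    have h1 : b.len ≤ (image (d ≫ e')).len := SimplexCategory.len_le_of_mono' hm
    have h2 : (image (d ≫ e')).len ≤ b'.len :=
      SimplexCategory.len_le_of_mono' (inferInstance : Mono (image.ι (d ≫ e')))
    have h3 : b'.len ≤ (image (d' ≫ e)).len := SimplexCategory.len_le_of_mono' hm'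
    have h4 : (image (d' ≫ e)).len ≤ b.len :=
      SimplexCategory.len_le_of_mono' (inferInstance : Mono (image.ι (d' ≫ e)))
    exact SimplexCategory.ext (by omega)
  subst hb
  -- every section of `e` is a section of `e'`
  have hsec : ∀ dd : b ⟶ a, dd ≫ e = 𝟙 b → dd ≫ e' = 𝟙 b := by
    intro dd hdd
    obtain ⟨-, hmdd⟩ := key e e' he y y' hy h dd hdd
    have him : image (dd ≫ e') = b := by
      apply SimplexCategory.ext
      have h1 : b.len ≤ (image (dd ≫ e')).len := SimplexCategory.len_le_of_mono' hmdd
      have h2 : (image (dd ≫ e')).len ≤ b.len :=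
        SimplexCategory.len_le_of_mono' (inferInstance : Mono (image.ι (dd ≫ e')))
      omega
    have hp : factorThruImage (dd ≫ e') = eqToHom him.symm :=
      eq_eqToHom_of_mono _ hmdd him.symm
    have hq : image.ι (dd ≫ e') = eqToHom him :=
      eq_eqToHom_of_mono _ inferInstance him
    rw [← image.fac (dd ≫ e'), hp, hq, eqToHom_trans, eqToHom_refl]
  have hee : e' = e := sections_determine e e' he hsec
  subst hee
  refine ⟨rfl, HEq.rfl, heq_of_eq ?_⟩
  exact epi_injective hX.1 a.len a b rfl e' he h

end Stmt14

end Aux5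

section Aux6

namespace Stmt14

open SimplexCategory CategoryTheory.Limits

/-- The semi-simplicial set of nondegenerate simplices of a split simplicial set. -/
def NDFun (X : SSet) (hX : Split X) : DeltaInjᵒᵖ ⥤ Type where
  obj c := {x : X.obj (op c.unop.obj) // ND X x}
  map {c c'} u := ↾fun x => ⟨X.map (u.unop.1).op x.1,
    nd_mono hX c.unop.obj.len c.unop.obj rfl c'.unop.obj u.unop.1 x.1
      (SimplexCategory.mono_iff_injective.mpr u.unop.2) x.2⟩
  map_id c := by
    ext x
    show X.map (𝟙 (op c.unop.obj)) x.1 = x.1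
    simp
  map_comp u v := by
    ext x
    exact FunctorToTypes.map_comp_apply X ((u.unop.1).op) ((v.unop.1).op) x.1

/-- The comparison map from the Kan extension of the nondegenerate part. -/
noncomputable def thetaApp (X : SSet) (hX : Split X) : LObj (NDFun X hX) ⟶ X where
  app c := ↾fun s => X.map s.e.op s.z.1
  naturality c c' f := by
    ext s
    haveI := s.he
    show X.map (factorThruImage (f.unop ≫ s.e)).op
        (X.map (image.ι (f.unop ≫ s.e)).op s.z.1) = X.map f (X.map s.e.op s.z.1)
    have key : (image.ι (f.unop ≫ s.e)).op ≫ (factorThruImage (f.unop ≫ s.e)).op = s.e.op ≫ f := by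
      rw [← op_comp, image.fac]; rfl
    exact (FunctorToTypes.map_comp_apply X _ _ _).symm.trans
      ((congrArg (fun g => X.map g s.z.1) key).trans (FunctorToTypes.map_comp_apply X _ _ _))

lemma theta_bij (X : SSet) (hX : Split X) (c : SimplexCategoryᵒᵖ) :
    Function.Bijective ((thetaApp X hX).app c) := by
  constructor
  · intro s t h
    obtain ⟨sb, se, she, sz⟩ := s
    obtain ⟨tb, te, the, tz⟩ := t
    have h' : X.map se.op sz.1 = X.map te.op tz.1 := h
    obtain ⟨hb, he2, hz⟩ := ez_unique hX se te she the sz.2 tz.2 h'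
    subst hb
    exact ESimp.ext3 rfl he2 (heq_of_eq (Subtype.ext (eq_of_heq hz)))
  · intro x
    obtain ⟨b, e, y, he, hnd, hxy⟩ := ez_exists hX c.unop.len c.unop rfl x
    exact ⟨⟨b, e, he, ⟨y, hnd⟩⟩, hxy.symm⟩

/-- The comparison isomorphism. -/
noncomputable def thetaIso (X : SSet) (hX : Split X) : LObj (NDFun X hX) ≅ X :=
  NatIso.ofComponents
    (fun c => Equiv.toIso (Equiv.ofBijective _ (theta_bij X hX c)))
    (fun f => (thetaApp X hX).naturality f)

lemma conservative_of_iso {Y X : SSet} (η : Y ≅ X) : Conservative η.hom := by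
  intro n i
  exact IsPullback.of_horiz_isIso ⟨(η.hom.naturality (SimplexCategory.σ i).op).symm⟩

lemma FS_essSurj : FS.EssSurj where
  mem_essImage A :=
    ⟨NDFun A.X A.split,
      ⟨{ hom := ⟨(thetaIso A.X A.split).hom, conservative_of_iso _⟩
         inv := ⟨(thetaIso A.X A.split).inv, conservative_of_iso (thetaIso A.X A.split).symm⟩
         hom_inv_id := Subtype.ext (thetaIso A.X A.split).hom_inv_id
         inv_hom_id := Subtype.ext (thetaIso A.X A.split).inv_hom_id }⟩⟩

end Stmt14

end Aux6

theorem statement14 :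
    ∃ F : (DeltaInjᵒᵖ ⥤ Type) ⥤ SplitSSet,
      Nonempty (F ⋙ SplitSSet.forget ≅ DeltaInj.incl.op.lan) ∧ F.IsEquivalence := by
  refine ⟨Stmt14.FS,
    ⟨Adjunction.leftAdjointUniq Stmt14.adjFS (DeltaInj.incl.op.lanAdjunction Type)⟩, ?_⟩
  haveI := Stmt14.FS_faithful
  haveI := Stmt14.FS_full
  haveI := Stmt14.FS_essSurj
  exact {}
end
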